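/- Let f be a polynomial over ℂ of degree 5, and for 1 ≤ ρ ≤ 4 let φ_ρ denote the average of f over the multiset of the (5−ρ) roots of the ρ-th derivative f^(ρ) (counted with multiplicity). Then 1·φ₁ − 3·φ₃ + 2·φ₄ = 0. -/

import Mathlib

open Polynomial

/-- The average of `f` over the roots of the `ρ`-th derivative of `f`,
counted with multiplicity. -/
noncomputable def phi (f : Polynomial ℂ) (ρ : ℕ) : ℂ :=
  ((derivative^[ρ] f).roots.map (fun x => f.eval x)).sum / ((f.natDegree - ρ : ℕ) : ℂ)

lemma card4' {s : Multiset ℂ} (h : Multiset.card s = 4) : ∃ x y z w, s = {x, y, z, w} := by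
  obtain ⟨x, hx⟩ := Multiset.card_pos_iff_exists_mem.mp (by rw [h]; norm_num)
  obtain ⟨t, rfl⟩ := Multiset.exists_cons_of_mem hx
  rw [Multiset.card_cons] at h
  obtain ⟨y, z, w, rfl⟩ := Multiset.card_eq_three.mp (show Multiset.card t = 3 by omega)
  exact ⟨x, y, z, w, rfl⟩

/-- In any quintic, `1·φ₁ − 3·φ₃ + 2·φ₄ = 0`. -/
theorem quintic_relation_c (f : Polynomial ℂ) (hf : f.degree = 5) :
    1 * phi f 1 - 3 * phi f 3 + 2 * phi f 4 = 0 := by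
  have hnd : f.natDegree = 5 := natDegree_eq_of_degree_eq_some hf
  have ha5 : f.coeff 5 ≠ 0 := by
    have h := leadingCoeff_ne_zero.mpr (show f ≠ 0 by intro h; rw [h] at hf; simp at hf)
    rwa [leadingCoeff, hnd] at h
  have nd : ∀ g : Polynomial ℂ, ∀ n : ℕ, g.natDegree = n + 1 → (derivative g).natDegree = n := by
    intro g n h
    have hh := degree_derivative_eq g (by omega)
    rw [h] at hh
    exact natDegree_eq_of_degree_eq_some (by rw [hh]; norm_num)
  have h1 : (derivative f).natDegree = 4 := nd f 4 hnd
  have h2 : (derivative (derivative f)).natDegree = 3 := nd _ 3 h1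
  have h3 : (derivative (derivative (derivative f))).natDegree = 2 := nd _ 2 h2
  have h4 : (derivative (derivative (derivative (derivative f)))).natDegree = 1 := nd _ 1 h3
  -- eval expansion
  have hev : ∀ r : ℂ, eval r f = f.coeff 0 + f.coeff 1*r + f.coeff 2*r^2 + f.coeff 3*r^3
      + f.coeff 4*r^4 + f.coeff 5*r^5 := by
    intro r
    rw [eval_eq_sum_range, hnd]
    simp [Finset.sum_range_succ]
    try ring
  -- roots of f'
  have hsp1 : Splits (derivative f) := IsAlgClosed.splits _
  obtain ⟨x, y, z, w, hr1⟩ := card4' (by rw [splits_iff_card_roots.mp hsp1, h1])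
  have hrep1 := hsp1.eq_prod_roots
  have hlc1 : (derivative f).leadingCoeff = (derivative f).coeff 4 := by
    rw [← coeff_natDegree, h1]
  rw [hr1, hlc1] at hrep1
  simp only [Multiset.insert_eq_cons, Multiset.map_cons, Multiset.map_singleton,
    Multiset.prod_cons, Multiset.prod_singleton] at hrep1
  rw [show (X - C x) * ((X - C y) * ((X - C z) * (X - C w))) =
      X^4 - C (x+y+z+w)*X^3 + C (x*y+x*z+x*w+y*z+y*w+z*w)*X^2
        - C (x*y*z+x*y*w+x*z*w+y*z*w)*X + C (x*y*z*w) by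
    simp only [map_add, map_mul]; ring] at hrep1
  have hc3 := congrArg (fun p => coeff p 3) hrep1
  have hc2 := congrArg (fun p => coeff p 2) hrep1
  have hc1 := congrArg (fun p => coeff p 1) hrep1
  have hc0 := congrArg (fun p => coeff p 0) hrep1
  simp only [coeff_add, coeff_sub, coeff_C_mul, coeff_X_pow, coeff_C, coeff_X, mul_ite,
    mul_one, mul_zero, coeff_derivative] at hc3 hc2 hc1 hc0
  norm_num at hc3 hc2 hc1 hc0
  -- hc3 : f.coeff 4 * 4 = f.coeff 5 * 5 * (-w + (-z + (-y + -x))) (roughly)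
  have he4 : f.coeff 4 = -(5*f.coeff 5*(x+y+z+w))/4 := by linear_combination hc3/4
  have he3 : f.coeff 3 = 5*f.coeff 5*(x*y+x*z+x*w+y*z+y*w+z*w)/3 := by linear_combination hc2/3
  have he2 : f.coeff 2 = -(5*f.coeff 5*(x*y*z+x*y*w+x*z*w+y*z*w))/2 := by linear_combination hc1/2
  have he1 : f.coeff 1 = 5*f.coeff 5*(x*y*z*w) := by linear_combination hc0
  -- roots of f'''
  have hsp3 : Splits (derivative (derivative (derivative f))) :=
    IsAlgClosed.splits _
  obtain ⟨u, v, hr3⟩ := Multiset.card_eq_two.mp (by rw [splits_iff_card_roots.mp hsp3, h3])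
  have hrep3 := hsp3.eq_prod_roots
  have hlc3 : (derivative (derivative (derivative f))).leadingCoeff
      = (derivative (derivative (derivative f))).coeff 2 := by rw [← coeff_natDegree, h3]
  rw [hr3, hlc3] at hrep3
  simp only [Multiset.insert_eq_cons, Multiset.map_cons, Multiset.map_singleton,
    Multiset.prod_cons, Multiset.prod_singleton] at hrep3
  rw [show (X - C u) * (X - C v) = X^2 - C (u+v)*X + C (u*v) by
    simp only [map_add, map_mul]; ring] at hrep3
  have hd1 := congrArg (fun p => coeff p 1) hrep3
  have hd0 := congrArg (fun p => coeff p 0) hrep3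
  simp only [coeff_add, coeff_sub, coeff_C_mul, coeff_X_pow, coeff_C, coeff_X, mul_ite,
    mul_one, mul_zero, coeff_derivative] at hd1 hd0
  norm_num at hd1 hd0
  have hs' : u + v = (x+y+z+w)/2 :=
    mul_left_cancel₀ ha5 (by linear_combination hd1/60 - (2/5)*he4)
  have hp' : u*v = (x*y+x*z+x*w+y*z+y*w+z*w)/6 :=
    mul_left_cancel₀ ha5 (by linear_combination -hd0/60 + he3/10)
  -- root of f''''
  have hsp4 : Splits (derivative (derivative (derivative (derivative f)))) :=
    IsAlgClosed.splits _
  obtain ⟨t, hr4⟩ := Multiset.card_eq_one.mp (by rw [splits_iff_card_roots.mp hsp4, h4])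
  have hrep4 := hsp4.eq_prod_roots
  have hlc4 : (derivative (derivative (derivative (derivative f)))).leadingCoeff
      = (derivative (derivative (derivative (derivative f)))).coeff 1 := by
    rw [← coeff_natDegree, h4]
  rw [hr4, hlc4] at hrep4
  simp only [Multiset.map_singleton, Multiset.prod_singleton] at hrep4
  have hg0 := congrArg (fun p => coeff p 0) hrep4
  simp only [coeff_sub, coeff_C_mul, coeff_C, coeff_X, mul_ite, mul_one, mul_zero,
    coeff_derivative] at hg0
  norm_num at hg0
  have ht' : t = (x+y+z+w)/4 :=
    mul_left_cancel₀ ha5 (by linear_combination hg0/120 - he4/5)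
  -- compute the three phis
  have hphi1 : phi f 1 = (eval x f + eval y f + eval z f + eval w f)/4 := by
    rw [phi, Function.iterate_one, hr1, hnd]
    simp [Multiset.insert_eq_cons]
    try ring
  have hphi3 : phi f 3 = (eval u f + eval v f)/2 := by
    rw [phi, show derivative^[3] f = derivative (derivative (derivative f)) from rfl, hr3, hnd]
    simp [Multiset.insert_eq_cons]
    try ring
  have hphi4 : phi f 4 = eval t f := by
    rw [phi, show derivative^[4] f = derivative (derivative (derivative (derivative f))) from rfl,
      hr4, hnd]
    simp
  -- symmetric reduction for u, v
  have hsum_uv : eval u f + eval v f = 2*f.coeff 0 + f.coeff 1*((x+y+z+w)/2)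
      + f.coeff 2*(((x+y+z+w)/2)^2 - 2*((x*y+x*z+x*w+y*z+y*w+z*w)/6))
      + f.coeff 3*(((x+y+z+w)/2)^3 - 3*((x*y+x*z+x*w+y*z+y*w+z*w)/6)*((x+y+z+w)/2))
      + f.coeff 4*(((x+y+z+w)/2)^4 - 4*((x*y+x*z+x*w+y*z+y*w+z*w)/6)*((x+y+z+w)/2)^2
          + 2*((x*y+x*z+x*w+y*z+y*w+z*w)/6)^2)
      + f.coeff 5*(((x+y+z+w)/2)^5 - 5*((x*y+x*z+x*w+y*z+y*w+z*w)/6)*((x+y+z+w)/2)^3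
          + 5*((x*y+x*z+x*w+y*z+y*w+z*w)/6)^2*((x+y+z+w)/2)) := by
    rw [hev u, hev v, ← hs', ← hp']; ring
  rw [hphi1, hphi3, hphi4, hsum_uv, hev x, hev y, hev z, hev w, hev t, ht',
    he1, he2, he3, he4]
  ring
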